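/- Let γ : ℝ → ℝ³ be a C¹ curve with γ(t) and γ'(t) linearly independent for every t, let φ : ℝ → ℝ be C¹ with φ'(t) ≠ 0 for all t, and let f : ℝ³ ≃ (ℝ³)* be a linear equivalence such that for every t the functional f(γ(φ(t))) vanishes on γ(t) and on γ'(t). Define fᵀ : ℝ³ → (ℝ³)* by fᵀ(x)(y) := f(y)(x). Then for every t there is a nonzero scalar c ∈ ℝ with fᵀ(γ(t)) = c • f(γ(φ(φ(t)))); equivalently, the projective transformation G of ℝP² induced by f⁻¹ ∘ fᵀ satisfies G(γ(t)) = γ(φ²(t)) projectively for every t. -/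

import Mathlib

/-- Curve analog of the shift lemma: for a self-dual curve with reparametrization `φ`, the
projective transformation `G = f⁻¹ ∘ fᵀ` satisfies `G(γ(t)) = γ(φ²(t))`, i.e. `fᵀ(γ(t))`
is proportional to `f(γ(φ(φ(t))))`. -/
theorem stmt_13 (γ : ℝ → Fin 3 → ℝ) (hγ : ContDiff ℝ 1 γ)
    (hind : ∀ t : ℝ, LinearIndependent ℝ ![γ t, deriv γ t])
    (φ : ℝ → ℝ) (hφ : ContDiff ℝ 1 φ) (hφ' : ∀ t, deriv φ t ≠ 0)
    (f : (Fin 3 → ℝ) ≃ₗ[ℝ] Module.Dual ℝ (Fin 3 → ℝ))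
    (hf : ∀ t : ℝ, f (γ (φ t)) (γ t) = 0 ∧ f (γ (φ t)) (deriv γ t) = 0) :
    ∀ t : ℝ, ∃ c : ℝ, c ≠ 0 ∧
      LinearMap.flip (f.toLinearMap) (γ t) = c • (f (γ (φ (φ t)))) := by
  have hγd : Differentiable ℝ γ := hγ.differentiable one_ne_zero
  have hφd : Differentiable ℝ φ := hφ.differentiable one_ne_zero
  -- the continuous bilinear version of `f`
  set F : (Fin 3 → ℝ) →L[ℝ] ((Fin 3 → ℝ) →L[ℝ] ℝ) :=
    LinearMap.toContinuousLinearMap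
      ((LinearMap.toContinuousLinearMap :
          ((Fin 3 → ℝ) →ₗ[ℝ] ℝ) ≃ₗ[ℝ] ((Fin 3 → ℝ) →L[ℝ] ℝ)).toLinearMap.comp
        f.toLinearMap) with hF
  have hFapp : ∀ x y, F x y = f x y := fun x y => rfl
  -- differentiate `f (γ (φ s)) (γ s) = 0`
  have hkey : ∀ s : ℝ, f (deriv γ (φ s)) (γ s) = 0 := by
    intro s
    have h1 : HasDerivAt (fun s => γ (φ s)) (deriv φ s • deriv γ (φ s)) s :=
      ((hγd (φ s)).hasDerivAt).scomp s (hφd s).hasDerivAt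
    have h2 : HasDerivAt (fun s => F (γ (φ s))) (F (deriv φ s • deriv γ (φ s))) s :=
      F.hasFDerivAt.comp_hasDerivAt s h1
    have h3 : HasDerivAt (fun s => F (γ (φ s)) (γ s))
        (F (deriv φ s • deriv γ (φ s)) (γ s) + F (γ (φ s)) (deriv γ s)) s :=
      h2.clm_apply (hγd s).hasDerivAt
    have h4 : (fun s => F (γ (φ s)) (γ s)) = fun _ => (0 : ℝ) := by
      funext u
      rw [hFapp]
      exact (hf u).1
    rw [h4] at h3
    have h5 := (hasDerivAt_const s (0 : ℝ)).unique h3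
    rw [map_smul] at h5
    have h6 : F (γ (φ s)) (deriv γ s) = 0 := by rw [hFapp]; exact (hf s).2
    rw [ContinuousLinearMap.smul_apply, hFapp, h6, add_zero, smul_eq_mul] at h5
    rcases mul_eq_zero.mp h5.symm with h | h
    · exact absurd h (hφ' s)
    · exact h
  intro t
  -- linear algebra part
  set a := γ (φ t) with ha
  set b := deriv γ (φ t) with hb
  set W : Subspace ℝ (Fin 3 → ℝ) := Submodule.span ℝ (Set.range ![a, b]) with hW
  have hWrank : Module.finrank ℝ W = 2 := by
    rw [finrank_span_eq_card (hind (φ t))]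
    simp
  have hVrank : Module.finrank ℝ (Fin 3 → ℝ) = 3 := by simp
  have hArank : Module.finrank ℝ W.dualAnnihilator = 1 := by
    have e := W.quotEquivAnnihilator
    have h1 : Module.finrank ℝ ((Fin 3 → ℝ) ⧸ W) = Module.finrank ℝ W.dualAnnihilator :=
      LinearEquiv.finrank_eq e
    have h2 := Submodule.finrank_quotient_add_finrank W
    omega
  set ψ₁ : Module.Dual ℝ (Fin 3 → ℝ) := LinearMap.flip (f.toLinearMap) (γ t) with hψ₁
  set ψ₂ : Module.Dual ℝ (Fin 3 → ℝ) := f (γ (φ (φ t))) with hψ₂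
  have hmem : ∀ ψ : Module.Dual ℝ (Fin 3 → ℝ), ψ a = 0 → ψ b = 0 →
      ψ ∈ W.dualAnnihilator := by
    intro ψ h0 h1
    rw [Submodule.mem_dualAnnihilator]
    intro w hw
    have hsub : W ≤ LinearMap.ker ψ := by
      rw [hW, Submodule.span_le]
      rintro x ⟨i, rfl⟩
      fin_cases i <;> simp [h0, h1]
    exact LinearMap.mem_ker.mp (hsub hw)
  have hmem₁ : ψ₁ ∈ W.dualAnnihilator := by
    refine hmem _ ?_ ?_
    · simpa [hψ₁, LinearMap.flip_apply] using (hf t).1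
    · simpa [hψ₁, LinearMap.flip_apply] using hkey t
  have hmem₂ : ψ₂ ∈ W.dualAnnihilator := hmem _ (hf (φ t)).1 (hf (φ t)).2
  have hγne : ∀ s, γ s ≠ 0 := by
    intro s hs
    have := (hind s).ne_zero 0
    simp [hs] at this
  have hψ₂ne : ψ₂ ≠ 0 := by
    simp only [hψ₂]
    rw [LinearEquiv.map_ne_zero_iff]
    exact hγne _
  have hψ₁ne : ψ₁ ≠ 0 := by
    intro h
    have h' : ∀ y, f y (γ t) = 0 := by
      intro y
      have : ψ₁ y = 0 := by rw [h]; rfl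
      simpa [hψ₁, LinearMap.flip_apply] using this
    have : γ t = 0 := by
      rw [← Module.forall_dual_apply_eq_zero_iff ℝ]
      intro g
      have := h' (f.symm g)
      rwa [f.apply_symm_apply] at this
    exact hγne t this
  -- both lie in the 1-dimensional annihilator
  set e₂ : W.dualAnnihilator := ⟨ψ₂, hmem₂⟩ with he₂
  have he₂ne : e₂ ≠ 0 := by
    intro h
    apply hψ₂ne
    exact congrArg Subtype.val h
  obtain ⟨c, hc⟩ := (finrank_eq_one_iff_of_nonzero' e₂ he₂ne).mp hArank ⟨ψ₁, hmem₁⟩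
  have hc' : c • ψ₂ = ψ₁ := congrArg Subtype.val hc
  refine ⟨c, ?_, hc'.symm⟩
  intro h
  apply hψ₁ne
  rw [← hc', h, zero_smul]
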